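/- arXiv:math-ph/0304016 — 2 statements merged into one kernel-verified Lean document; each statement's English description precedes it below -/
import Mathlib

section
/- Brezin–Hikami formula: the average of the product of L characteristic polynomials ∏_{j=1}^{L} ∏_{i=1}^{N}(μ_j − xᵢ) with respect to the unitary-ensemble eigenvalue measure Δ(x)²dα(x)/Z_N equals det(π_{N+j−1}(μᵢ))₁≤i,j≤L divided by the Vandermonde Δ(μ) = ∏_{i>j}(μᵢ − μ_j). -/
open MeasureTheory Polynomial Finset Matrix

/-- The Vandermonde product `∏_{i>j} (x i - x j)`. -/
noncomputable def Vand {n : ℕ} (x : Fin n → ℝ) : ℝ :=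
  ∏ i : Fin n, ∏ j ∈ Finset.Iio i, (x i - x j)

section BrezinHikamiAux
open Equiv

lemma prod_Iio_swap {n : ℕ} (f : Fin n → Fin n → ℝ) :
    ∏ i, ∏ j ∈ Finset.Iio i, f i j = ∏ i, ∏ j ∈ Finset.Ioi i, f j i := by
  rw [Finset.prod_sigma', Finset.prod_sigma']
  refine Finset.prod_nbij' (fun p => ⟨p.2, p.1⟩) (fun p => ⟨p.2, p.1⟩) ?_ ?_ ?_ ?_ ?_ <;>
    simp [Finset.mem_sigma]

lemma vand_eq_det {n : ℕ} (π : ℕ → Polynomial ℝ)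
    (hmonic : ∀ j, (π j).Monic) (hdeg : ∀ j, (π j).natDegree = j) (v : Fin n → ℝ) :
    Vand v = (Matrix.of fun i j : Fin n => (π (j : ℕ)).eval (v i)).det := by
  rw [← Matrix.det_eval_matrixOfPolynomials_eq_det_vandermonde v (fun j => π (j : ℕ))
      (fun i => hdeg _) (fun i => hmonic _), Matrix.det_vandermonde]
  exact prod_Iio_swap _

lemma append_eq_elim {α : Type*} {N L : ℕ} (x : Fin N → α) (y : Fin L → α) (i : Fin (N + L)) :
    Fin.append x y i = Sum.elim x y (finSumFinEquiv.symm i) := by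
  obtain ⟨s, rfl⟩ := finSumFinEquiv.surjective i
  cases s <;> simp [finSumFinEquiv_apply_left, finSumFinEquiv_apply_right]

lemma vand_snoc {n : ℕ} (w : Fin n → ℝ) (a : ℝ) :
    Vand (Fin.snoc w a) = Vand w * ∏ i, (a - w i) := by
  unfold Vand
  rw [Fin.prod_univ_castSucc]
  congr 1
  · refine Finset.prod_congr rfl fun i _ => ?_
    rw [Fin.Iio_castSucc, Finset.prod_map]
    simp only [Fin.coe_castSuccEmb, Fin.snoc_castSucc]
  · rw [Fin.Iio_last_eq_map, Finset.prod_map]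
    simp only [Fin.coe_castSuccEmb, Fin.snoc_castSucc, Fin.snoc_last]

lemma vand_append {N L : ℕ} (x : Fin N → ℝ) (μ : Fin L → ℝ) :
    Vand (Fin.append x μ) = Vand x * Vand μ * ∏ j, ∏ i, (μ j - x i) := by
  induction L with
  | zero =>
      have h0 : μ = Fin.elim0 := funext fun i => i.elim0
      subst h0
      rw [Fin.append_elim0]
      have hc : Fin.cast (Nat.add_zero N) = id := by funext i; ext; simp
      rw [hc]
      simp [Vand]
  | succ L ih =>
      have happ : ∀ c : ℝ, ∏ i : Fin (N + L), (c - Fin.append x (Fin.init μ) i) =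
          (∏ i : Fin N, (c - x i)) * ∏ i : Fin L, (c - Fin.init μ i) := by
        intro c
        rw [Fintype.prod_equiv finSumFinEquiv.symm _
          (fun s => (c - Sum.elim x (Fin.init μ) s)) (fun i => by rw [append_eq_elim]),
          Fintype.prod_sum_type]
        simp
      have hμ : μ = Fin.snoc (Fin.init μ) (μ (Fin.last L)) := (Fin.snoc_init_self μ).symm
      rw [hμ, Fin.append_snoc, vand_snoc, vand_snoc, ih]
      rw [Fin.prod_univ_castSucc (f := fun j => ∏ i, (Fin.snoc (Fin.init μ) (μ (Fin.last L)) j - x i))]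
      simp only [Fin.snoc_castSucc, Fin.snoc_last, Nat.add_eq]
      rw [happ]
      simp only [Fin.init]
      ring

lemma pi_prod_integral {n : ℕ} (α : Measure ℝ) [IsFiniteMeasure α] (f : Fin n → ℝ → ℝ)
    (hf : ∀ i, Integrable (f i) α) :
    ∫ x : Fin n → ℝ, ∏ i, f i (x i) ∂(Measure.pi fun _ => α) = ∏ i, ∫ t, f i t ∂α := by
  letI : MeasureSpace ℝ := ⟨α⟩
  have h : (Measure.pi fun _ : Fin n => α) = (volume : Measure (Fin n → ℝ)) := by
    rw [volume_pi]; rfl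
  rw [h]
  exact MeasureTheory.integral_fintype_prod_eq_prod (fun i => f i)

lemma pi_prod_integrable {n : ℕ} (α : Measure ℝ) [IsFiniteMeasure α] (f : Fin n → ℝ → ℝ)
    (hf : ∀ i, Integrable (f i) α) :
    Integrable (fun x : Fin n → ℝ => ∏ i, f i (x i)) (Measure.pi fun _ => α) := by
  letI : MeasureSpace ℝ := ⟨α⟩
  have h : (Measure.pi fun _ : Fin n => α) = (volume : Measure (Fin n → ℝ)) := by
    rw [volume_pi]; rfl
  rw [h]
  exact MeasureTheory.Integrable.fintype_prod (f := fun i => f i) hf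

lemma integrable_eval (α : Measure ℝ) [IsFiniteMeasure α] {Q : ℝ}
    (hQ : α (Set.Icc (-Q) Q)ᶜ = 0) (p : Polynomial ℝ) :
    Integrable (fun t => p.eval t) α := by
  obtain ⟨C, hC⟩ := (isCompact_Icc (a := -Q) (b := Q)).exists_bound_of_continuousOn
    p.continuous.continuousOn
  refine Integrable.mono' (integrable_const C) p.continuous.aestronglyMeasurable ?_
  have hae' : ∀ᵐ t ∂α, t ∉ (Set.Icc (-Q) Q)ᶜ := measure_eq_zero_iff_ae_notMem.mp hQ
  have hae : ∀ᵐ t ∂α, t ∈ Set.Icc (-Q) Q := by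
    filter_upwards [hae'] with t ht using not_not.mp (by simpa using ht)
  filter_upwards [hae] with t ht
  exact hC t ht

lemma expandVand {n : ℕ} (π : ℕ → Polynomial ℝ)
    (hmonic : ∀ j, (π j).Monic) (hdeg : ∀ j, (π j).natDegree = j) (v : Fin n → ℝ) :
    Vand v = ∑ τ : Perm (Fin n), ((Perm.sign τ : ℤ) : ℝ) * ∏ i, (π ((τ i : Fin n) : ℕ)).eval (v i) := by
  rw [vand_eq_det π hmonic hdeg, ← Matrix.det_transpose, Matrix.det_apply']
  rfl

lemma sign_mul_self_cast {n : ℕ} (τ : Perm (Fin n)) :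
    ((Perm.sign τ : ℤ) : ℝ) * ((Perm.sign τ : ℤ) : ℝ) = 1 := by
  have := Int.units_mul_self (Perm.sign τ)
  rw [← Int.cast_mul, ← Units.val_mul, this]
  norm_num

lemma keyZ {N : ℕ} (α : Measure ℝ) [IsFiniteMeasure α] {Q : ℝ}
    (hQ : α (Set.Icc (-Q) Q)ᶜ = 0)
    (π : ℕ → Polynomial ℝ)
    (hmonic : ∀ j, (π j).Monic) (hdeg : ∀ j, (π j).natDegree = j)
    (horth : ∀ j k, j ≠ k → ∫ t, (π j).eval t * (π k).eval t ∂α = 0) :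
    ∫ x : Fin N → ℝ, (Vand x) ^ 2 ∂(Measure.pi fun _ => α)
      = (Fintype.card (Perm (Fin N)) : ℝ) * ∏ i : Fin N, ∫ t, (π i).eval t * (π i).eval t ∂α := by
  have hint : ∀ a b : ℕ, Integrable (fun t => (π a).eval t * (π b).eval t) α := fun a b => by
    simpa [Polynomial.eval_mul] using integrable_eval α hQ (π a * π b)
  have h1 : ∀ x : Fin N → ℝ, (Vand x) ^ 2 =
      ∑ τ : Perm (Fin N), ∑ τ' : Perm (Fin N),
        (((Perm.sign τ : ℤ) : ℝ) * ((Perm.sign τ' : ℤ) : ℝ)) *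
          ∏ i, ((π ((τ i : Fin N) : ℕ)).eval (x i) * (π ((τ' i : Fin N) : ℕ)).eval (x i)) := by
    intro x
    rw [sq, expandVand π hmonic hdeg, Finset.sum_mul_sum]
    refine Finset.sum_congr rfl fun τ _ => Finset.sum_congr rfl fun τ' _ => ?_
    rw [Finset.prod_mul_distrib]; ring
  simp_rw [h1]
  rw [integral_finset_sum _ (fun τ _ => integrable_finset_sum _ (fun τ' _ =>
    ((pi_prod_integrable α _ (fun i => hint _ _)).const_mul _)))]
  have h2 : ∀ τ : Perm (Fin N), ∫ x : Fin N → ℝ, ∑ τ' : Perm (Fin N),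
      (((Perm.sign τ : ℤ) : ℝ) * ((Perm.sign τ' : ℤ) : ℝ)) *
        ∏ i, ((π ((τ i : Fin N) : ℕ)).eval (x i) * (π ((τ' i : Fin N) : ℕ)).eval (x i))
        ∂(Measure.pi fun _ => α)
      = ∏ i : Fin N, ∫ t, (π i).eval t * (π i).eval t ∂α := by
    intro τ
    rw [integral_finset_sum _ (fun τ' _ => (pi_prod_integrable α _ (fun i => hint _ _)).const_mul _)]
    have h3 : ∀ τ' : Perm (Fin N),
        (∫ x : Fin N → ℝ, (((Perm.sign τ : ℤ) : ℝ) * ((Perm.sign τ' : ℤ) : ℝ)) *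
          ∏ i, ((π ((τ i : Fin N) : ℕ)).eval (x i) * (π ((τ' i : Fin N) : ℕ)).eval (x i))
          ∂(Measure.pi fun _ => α))
        = (((Perm.sign τ : ℤ) : ℝ) * ((Perm.sign τ' : ℤ) : ℝ)) *
          ∏ i, ∫ t, (π ((τ i : Fin N) : ℕ)).eval t * (π ((τ' i : Fin N) : ℕ)).eval t ∂α := by
      intro τ'
      rw [MeasureTheory.integral_const_mul, pi_prod_integral α _ (fun i => hint _ _)]
    simp_rw [h3]
    rw [Finset.sum_eq_single τ]
    · rw [sign_mul_self_cast]
      rw [one_mul]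
      exact Equiv.prod_comp τ (fun i => ∫ t, (π (i : ℕ)).eval t * (π (i : ℕ)).eval t ∂α)
    · intro τ' _ hne
      obtain ⟨i, hi⟩ : ∃ i, τ i ≠ τ' i := by
        by_contra h
        push_neg at h
        exact hne (Equiv.ext fun i => (h i).symm)
      rw [Finset.prod_eq_zero (Finset.mem_univ i) (horth _ _ (fun h => hi (Fin.val_injective h))),
        mul_zero]
    · intro h; exact absurd (Finset.mem_univ τ) h
  simp_rw [h2]
  rw [Finset.sum_const, card_univ, nsmul_eq_mul]

lemma expandVandAppend {N L : ℕ} (π : ℕ → Polynomial ℝ)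
    (hmonic : ∀ j, (π j).Monic) (hdeg : ∀ j, (π j).natDegree = j)
    (x : Fin N → ℝ) (μ : Fin L → ℝ) :
    Vand (Fin.append x μ) = ∑ σ : Perm (Fin N ⊕ Fin L), ((Perm.sign σ : ℤ) : ℝ) *
      ((∏ i : Fin N, (π ((finSumFinEquiv (σ (Sum.inl i)) : Fin (N + L)) : ℕ)).eval (x i)) *
       (∏ j : Fin L, (π ((finSumFinEquiv (σ (Sum.inr j)) : Fin (N + L)) : ℕ)).eval (μ j))) := by
  rw [vand_eq_det π hmonic hdeg (Fin.append x μ)]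
  have hM : (Matrix.of fun i j : Fin (N + L) => (π ((j : Fin (N+L)) : ℕ)).eval (Fin.append x μ i))
      = (Matrix.reindex finSumFinEquiv finSumFinEquiv
          (Matrix.of fun s t : Fin N ⊕ Fin L =>
            (π ((finSumFinEquiv t : Fin (N + L)) : ℕ)).eval (Sum.elim x μ s))) := by
    ext i j
    simp [Matrix.reindex_apply, append_eq_elim, Equiv.apply_symm_apply]
  rw [hM, Matrix.det_reindex_self, ← Matrix.det_transpose, Matrix.det_apply']
  refine Finset.sum_congr rfl fun σ _ => ?_
  rw [show (∏ i : Fin N ⊕ Fin L, (Matrix.of fun s t : Fin N ⊕ Fin L =>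
      (π ((finSumFinEquiv t : Fin (N + L)) : ℕ)).eval (Sum.elim x μ s))ᵀ (σ i) i)
    = ∏ i : Fin N ⊕ Fin L,
        (π ((finSumFinEquiv (σ i) : Fin (N + L)) : ℕ)).eval (Sum.elim x μ i) from rfl,
    Fintype.prod_sum_type]
  rfl

lemma keyNum {N L : ℕ} (α : Measure ℝ) [IsFiniteMeasure α] {Q : ℝ}
    (hQ : α (Set.Icc (-Q) Q)ᶜ = 0)
    (π : ℕ → Polynomial ℝ)
    (hmonic : ∀ j, (π j).Monic) (hdeg : ∀ j, (π j).natDegree = j)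
    (horth : ∀ j k, j ≠ k → ∫ t, (π j).eval t * (π k).eval t ∂α = 0)
    (μ : Fin L → ℝ) :
    ∫ x : Fin N → ℝ, Vand x * Vand (Fin.append x μ) ∂(Measure.pi fun _ => α)
      = (Fintype.card (Perm (Fin N)) : ℝ) * (∏ i : Fin N, ∫ t, (π i).eval t * (π i).eval t ∂α)
        * (Matrix.of fun i j : Fin L => (π (N + j)).eval (μ i)).det := by
  classical
  have hint : ∀ a b : ℕ, Integrable (fun t => (π a).eval t * (π b).eval t) α := fun a b => by
    simpa [Polynomial.eval_mul] using integrable_eval α hQ (π a * π b)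
  -- step B : expand integrand
  have h1 : ∀ x : Fin N → ℝ, Vand x * Vand (Fin.append x μ) =
      ∑ τ : Perm (Fin N), ∑ σ : Perm (Fin N ⊕ Fin L),
        (((Perm.sign τ : ℤ) : ℝ) * ((Perm.sign σ : ℤ) : ℝ) *
          ∏ j : Fin L, (π ((finSumFinEquiv (σ (Sum.inr j)) : Fin (N + L)) : ℕ)).eval (μ j)) *
        ∏ i : Fin N, ((π ((τ i : Fin N) : ℕ)).eval (x i) *
          (π ((finSumFinEquiv (σ (Sum.inl i)) : Fin (N + L)) : ℕ)).eval (x i)) := by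
    intro x
    rw [expandVand π hmonic hdeg, expandVandAppend π hmonic hdeg, Finset.sum_mul_sum]
    refine Finset.sum_congr rfl fun τ _ => Finset.sum_congr rfl fun σ _ => ?_
    rw [Finset.prod_mul_distrib]; ring
  simp_rw [h1]
  rw [integral_finset_sum _ (fun τ _ => integrable_finset_sum _ (fun σ _ =>
    ((pi_prod_integrable α _ (fun i => hint _ _)).const_mul _)))]
  -- step C : integrate each term
  have h2 : ∀ τ : Perm (Fin N),
      (∫ x : Fin N → ℝ, ∑ σ : Perm (Fin N ⊕ Fin L),
        (((Perm.sign τ : ℤ) : ℝ) * ((Perm.sign σ : ℤ) : ℝ) *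
          ∏ j : Fin L, (π ((finSumFinEquiv (σ (Sum.inr j)) : Fin (N + L)) : ℕ)).eval (μ j)) *
        ∏ i : Fin N, ((π ((τ i : Fin N) : ℕ)).eval (x i) *
          (π ((finSumFinEquiv (σ (Sum.inl i)) : Fin (N + L)) : ℕ)).eval (x i))
        ∂(Measure.pi fun _ => α))
      = ∑ σ : Perm (Fin N ⊕ Fin L),
        (((Perm.sign τ : ℤ) : ℝ) * ((Perm.sign σ : ℤ) : ℝ) *
          ∏ j : Fin L, (π ((finSumFinEquiv (σ (Sum.inr j)) : Fin (N + L)) : ℕ)).eval (μ j)) *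
        ∏ i : Fin N, ∫ t, (π ((τ i : Fin N) : ℕ)).eval t *
          (π ((finSumFinEquiv (σ (Sum.inl i)) : Fin (N + L)) : ℕ)).eval t ∂α := by
    intro τ
    rw [integral_finset_sum _ (fun σ _ => (pi_prod_integrable α _ (fun i => hint _ _)).const_mul _)]
    refine Finset.sum_congr rfl fun σ _ => ?_
    rw [MeasureTheory.integral_const_mul, pi_prod_integral α _ (fun i => hint _ _)]
  simp_rw [h2]
  -- step D : restrict the sum over σ to block permutations
  have h3 : ∀ τ : Perm (Fin N),
      (∑ σ : Perm (Fin N ⊕ Fin L),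
        (((Perm.sign τ : ℤ) : ℝ) * ((Perm.sign σ : ℤ) : ℝ) *
          ∏ j : Fin L, (π ((finSumFinEquiv (σ (Sum.inr j)) : Fin (N + L)) : ℕ)).eval (μ j)) *
        ∏ i : Fin N, ∫ t, (π ((τ i : Fin N) : ℕ)).eval t *
          (π ((finSumFinEquiv (σ (Sum.inl i)) : Fin (N + L)) : ℕ)).eval t ∂α)
      = ∑ ρ : Perm (Fin L),
        (((Perm.sign τ : ℤ) : ℝ) * ((Perm.sign (Equiv.sumCongr τ ρ) : ℤ) : ℝ) *
          ∏ j : Fin L, (π ((finSumFinEquiv ((Equiv.sumCongr τ ρ) (Sum.inr j)) : Fin (N + L)) : ℕ)).eval (μ j)) *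
        ∏ i : Fin N, ∫ t, (π ((τ i : Fin N) : ℕ)).eval t *
          (π ((finSumFinEquiv ((Equiv.sumCongr τ ρ) (Sum.inl i)) : Fin (N + L)) : ℕ)).eval t ∂α := by
    intro τ
    set F : Perm (Fin N ⊕ Fin L) → ℝ := fun σ =>
        (((Perm.sign τ : ℤ) : ℝ) * ((Perm.sign σ : ℤ) : ℝ) *
          ∏ j : Fin L, (π ((finSumFinEquiv (σ (Sum.inr j)) : Fin (N + L)) : ℕ)).eval (μ j)) *
        ∏ i : Fin N, ∫ t, (π ((τ i : Fin N) : ℕ)).eval t *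
          (π ((finSumFinEquiv (σ (Sum.inl i)) : Fin (N + L)) : ℕ)).eval t ∂α with hF
    show ∑ σ : Perm (Fin N ⊕ Fin L), F σ = ∑ ρ : Perm (Fin L), F (Equiv.sumCongr τ ρ)
    have hinj : ∀ ρ ∈ (Finset.univ : Finset (Perm (Fin L))), ∀ ρ' ∈ (Finset.univ : Finset (Perm (Fin L))),
        Equiv.sumCongr τ ρ = Equiv.sumCongr τ ρ' → ρ = ρ' := by
      intro ρ _ ρ' _ h
      refine Equiv.ext fun b => ?_
      have := Equiv.congr_fun h (Sum.inr b)
      simpa using this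
    have hvanish : ∀ σ ∈ (Finset.univ : Finset (Perm (Fin N ⊕ Fin L))),
        σ ∉ Finset.univ.image (fun ρ : Perm (Fin L) => Equiv.sumCongr τ ρ) → F σ = 0 := by
      intro σ _ hσnotin
      have hnl : ¬ ∀ i, σ (Sum.inl i) = Sum.inl (τ i) := by
        intro hall
        apply hσnotin
        have hmaps : Set.MapsTo σ (Set.range Sum.inl) (Set.range Sum.inl) := by
          rintro _ ⟨a, rfl⟩
          exact ⟨τ a, (hall a).symm⟩
        obtain ⟨⟨τ', ρ⟩, hp⟩ := Perm.mem_sumCongrHom_range_of_perm_mapsTo_inl hmaps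
        have hττ' : τ' = τ := Equiv.ext fun i => by
          have h1 : (Perm.sumCongrHom (Fin N) (Fin L) (τ', ρ)) (Sum.inl i) = σ (Sum.inl i) := by
            rw [hp]
          rw [hall i] at h1
          have h2 : (Sum.inl (τ' i) : Fin N ⊕ Fin L) = Sum.inl (τ i) := by simpa using h1
          exact Sum.inl_injective h2
        refine Finset.mem_image.2 ⟨ρ, Finset.mem_univ _, ?_⟩
        rw [← hττ']
        exact hp
      push_neg at hnl
      obtain ⟨i, hi⟩ := hnl
      have hzero : (∫ t, (π ((τ i : Fin N) : ℕ)).eval t *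
          (π ((finSumFinEquiv (σ (Sum.inl i)) : Fin (N + L)) : ℕ)).eval t ∂α) = 0 := by
        apply horth
        rcases h : σ (Sum.inl i) with a | b
        · rw [h] at hi
          have hai : a ≠ τ i := fun hcontr => hi (by rw [hcontr])
          simp only [finSumFinEquiv_apply_left, Fin.coe_castAdd]
          exact fun hcontr => hai (Fin.val_injective hcontr).symm
        · simp only [finSumFinEquiv_apply_right, Fin.coe_natAdd]
          omega
      simp only [hF]
      rw [Finset.prod_eq_zero (Finset.mem_univ i) hzero, mul_zero]
    calc ∑ σ : Perm (Fin N ⊕ Fin L), F σ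
        = ∑ σ ∈ Finset.univ.image (fun ρ : Perm (Fin L) => Equiv.sumCongr τ ρ), F σ :=
          (Finset.sum_subset (Finset.subset_univ _) hvanish).symm
      _ = ∑ ρ : Perm (Fin L), F (Equiv.sumCongr τ ρ) := Finset.sum_image hinj
  simp_rw [h3]
  -- step E : simplify the block-permutation sum
  have h4 : ∀ τ : Perm (Fin N), ∀ ρ : Perm (Fin L),
      (((Perm.sign τ : ℤ) : ℝ) * ((Perm.sign (Equiv.sumCongr τ ρ) : ℤ) : ℝ) *
          ∏ j : Fin L, (π ((finSumFinEquiv ((Equiv.sumCongr τ ρ) (Sum.inr j)) : Fin (N + L)) : ℕ)).eval (μ j)) *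
        ∏ i : Fin N, ∫ t, (π ((τ i : Fin N) : ℕ)).eval t *
          (π ((finSumFinEquiv ((Equiv.sumCongr τ ρ) (Sum.inl i)) : Fin (N + L)) : ℕ)).eval t ∂α
      = (∏ i : Fin N, ∫ t, (π i).eval t * (π i).eval t ∂α) *
          (((Perm.sign ρ : ℤ) : ℝ) * ∏ j : Fin L, (π (N + (ρ j : ℕ))).eval (μ j)) := by
    intro τ ρ
    have e1 : ∀ i : Fin N, ((finSumFinEquiv ((Equiv.sumCongr τ ρ) (Sum.inl i)) : Fin (N + L)) : ℕ)
        = ((τ i : Fin N) : ℕ) := by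
      intro i; simp [finSumFinEquiv_apply_left]
    have e2 : ∀ j : Fin L, ((finSumFinEquiv ((Equiv.sumCongr τ ρ) (Sum.inr j)) : Fin (N + L)) : ℕ)
        = N + (ρ j : ℕ) := by
      intro j; simp [finSumFinEquiv_apply_right]
    simp_rw [e1, e2]
    have hsign : ((Perm.sign (Equiv.sumCongr τ ρ) : ℤ) : ℝ)
        = ((Perm.sign τ : ℤ) : ℝ) * ((Perm.sign ρ : ℤ) : ℝ) := by
      rw [Equiv.Perm.sign_sumCongr]; push_cast; ring
    have hprod : (∏ i : Fin N, ∫ t, (π ((τ i : Fin N) : ℕ)).eval t * (π ((τ i : Fin N) : ℕ)).eval t ∂α)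
        = ∏ i : Fin N, ∫ t, (π i).eval t * (π i).eval t ∂α :=
      Equiv.prod_comp τ (fun i : Fin N => ∫ t, (π (i : ℕ)).eval t * (π (i : ℕ)).eval t ∂α)
    rw [hsign, hprod]
    have hss := sign_mul_self_cast τ
    rw [← mul_assoc ((Perm.sign τ : ℤ) : ℝ) ((Perm.sign τ : ℤ) : ℝ), hss, one_mul]
    ring
  simp_rw [h4]
  have h5 : (∑ ρ : Perm (Fin L), ((Perm.sign ρ : ℤ) : ℝ) *
      ∏ j : Fin L, (π (N + ((ρ j : Fin L) : ℕ))).eval (μ j))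
      = (Matrix.of fun i j : Fin L => (π (N + (j : ℕ))).eval (μ i)).det := by
    rw [← Matrix.det_transpose, Matrix.det_apply']
    rfl
  simp_rw [← Finset.mul_sum]
  rw [h5, Finset.sum_const, card_univ, nsmul_eq_mul]
  ring


end BrezinHikamiAux

/-- Brezin–Hikami formula: the average of a product of `L` characteristic polynomials
equals `det(π_{N+j-1}(μ_i)) / Δ(μ)`. -/
theorem brezin_hikami_formula (α : Measure ℝ) [IsFiniteMeasure α] (Q : ℝ)
    (hQ : α (Set.Icc (-Q) Q)ᶜ = 0)
    (hposdef : ∀ p : Polynomial ℝ, p ≠ 0 → 0 < ∫ t, (p.eval t) ^ 2 ∂α)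
    (π : ℕ → Polynomial ℝ)
    (hmonic : ∀ j, (π j).Monic) (hdeg : ∀ j, (π j).natDegree = j)
    (horth : ∀ j k, j ≠ k → ∫ t, (π j).eval t * (π k).eval t ∂α = 0)
    (L N : ℕ) (μ : Fin L → ℝ) (hμ : Function.Injective μ) (hμQ : ∀ i, Q < μ i)
    (Z : ℝ)
    (hZ : Z = ∫ x : Fin N → ℝ, (Vand x) ^ 2 ∂(Measure.pi fun _ => α)) :
    (1 / Z) * ∫ x : Fin N → ℝ, (∏ j : Fin L, ∏ i, (μ j - x i)) * (Vand x) ^ 2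
        ∂(Measure.pi fun _ => α)
      = (Matrix.of fun i j : Fin L => (π (N + j)).eval (μ i)).det / Vand μ := by
  have hVμ : Vand μ ≠ 0 := by
    unfold Vand
    rw [Finset.prod_ne_zero_iff]
    intro i _
    rw [Finset.prod_ne_zero_iff]
    intro j hj
    exact sub_ne_zero.2 fun h => absurd rfl ((hμ h).symm ▸ (Finset.mem_Iio.mp hj).ne)
  have hpos : ∀ i : ℕ, 0 < ∫ t, (π i).eval t * (π i).eval t ∂α := fun i => by
    simpa [sq] using hposdef (π i) (hmonic i).ne_zero
  have hK : (Fintype.card (Equiv.Perm (Fin N)) : ℝ) *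
      (∏ i : Fin N, ∫ t, (π i).eval t * (π i).eval t ∂α) ≠ 0 := by
    apply mul_ne_zero
    · exact_mod_cast Fintype.card_ne_zero
    · exact (Finset.prod_pos fun (i : Fin N) _ => hpos (i : ℕ)).ne'
  have hptwise : ∀ x : Fin N → ℝ,
      (∏ j : Fin L, ∏ i, (μ j - x i)) * (Vand x) ^ 2
        = (Vand μ)⁻¹ * (Vand x * Vand (Fin.append x μ)) := by
    intro x
    rw [vand_append]
    field_simp
  simp_rw [hptwise]
  rw [MeasureTheory.integral_const_mul,
    keyNum α hQ π hmonic hdeg horth μ, hZ,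
    keyZ α hQ π hmonic hdeg horth]
  field_simp
  exact mul_div_cancel_left₀ _ (by simpa [sq] using (Finset.prod_pos fun (i : Fin N) _ => hpos (i : ℕ)).ne')
end

section
/- Corollary of Christoffel's formula: the product ∏_{j=0}^{ℓ} π_n^{[j]}(μ_{j+1}) of monic orthogonal polynomials with respect to the successive measures dα^{[j]}(t) = (μ_j − t)⋯(μ₁ − t)dα(t), evaluated at the next point μ_{j+1}, equals det(π_{n+j−1}(μᵢ))₁≤i,j≤ℓ+1 divided by the Vandermonde determinant Δ(μ) of μ₁,…,μ_{ℓ+1}. -/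
open MeasureTheory Polynomial Finset Matrix
open scoped ENNReal NNReal

private lemma aux_ae_Icc {Q : ℝ} (β : Measure ℝ) (hβ : β (Set.Icc (-Q) Q)ᶜ = 0) :
    ∀ᵐ t ∂β, t ∈ Set.Icc (-Q) Q := by
  rw [MeasureTheory.ae_iff]
  exact hβ

private lemma aux_integrable {Q : ℝ} (β : Measure ℝ) [IsFiniteMeasure β]
    (hβ : β (Set.Icc (-Q) Q)ᶜ = 0) (p : Polynomial ℝ) :
    Integrable (fun t => p.eval t) β := by
  obtain ⟨C, hC⟩ : ∃ C, ∀ t ∈ Set.Icc (-Q) Q, ‖p.eval t‖ ≤ C :=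
    (isCompact_Icc (a := -Q) (b := Q)).exists_bound_of_continuousOn
      (p.continuous_aeval.continuousOn)
  refine Integrable.mono' (integrable_const C) (p.continuous_aeval.aestronglyMeasurable) ?_
  filter_upwards [aux_ae_Icc β hβ] with t ht
  exact hC t ht

private lemma aux_withDensity_compl_zero {Q : ℝ} (α : Measure ℝ)
    (hQ : α (Set.Icc (-Q) Q)ᶜ = 0) (f : ℝ → ℝ≥0∞) :
    (α.withDensity f) (Set.Icc (-Q) Q)ᶜ = 0 := by
  rw [withDensity_apply _ (measurableSet_Icc.compl)]
  exact setLIntegral_measure_zero _ _ hQ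

private lemma aux_withDensity_finite {Q : ℝ} (α : Measure ℝ) [IsFiniteMeasure α]
    (hQ : α (Set.Icc (-Q) Q)ᶜ = 0) (G : Polynomial ℝ) :
    IsFiniteMeasure (α.withDensity (fun t => ENNReal.ofReal (G.eval t))) := by
  obtain ⟨C, hC⟩ : ∃ C, ∀ t ∈ Set.Icc (-Q) Q, ‖G.eval t‖ ≤ C :=
    (isCompact_Icc (a := -Q) (b := Q)).exists_bound_of_continuousOn
      (G.continuous_aeval.continuousOn)
  constructor
  rw [withDensity_apply _ MeasurableSet.univ]
  have h1 : ∫⁻ t in Set.Icc (-Q) Q, ENNReal.ofReal (G.eval t) ∂α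
      + ∫⁻ t in (Set.Icc (-Q) Q)ᶜ, ENNReal.ofReal (G.eval t) ∂α
      = ∫⁻ t in Set.univ, ENNReal.ofReal (G.eval t) ∂α := by
    rw [Measure.restrict_univ]
    exact lintegral_add_compl _ measurableSet_Icc
  rw [← h1, setLIntegral_measure_zero _ _ hQ, add_zero]
  calc ∫⁻ t in Set.Icc (-Q) Q, ENNReal.ofReal (G.eval t) ∂α
      ≤ ∫⁻ _ in Set.Icc (-Q) Q, ENNReal.ofReal C ∂α := by
        refine setLIntegral_mono' measurableSet_Icc fun t ht => ?_
        exact ENNReal.ofReal_le_ofReal ((le_abs_self _).trans (hC t ht))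
    _ = ENNReal.ofReal C * α (Set.Icc (-Q) Q) := setLIntegral_const _ _
    _ < ⊤ := ENNReal.mul_lt_top ENNReal.ofReal_lt_top (measure_lt_top _ _)

private lemma aux_withDensity_integral (α : Measure ℝ) (G : Polynomial ℝ)
    (hgpos : ∀ᵐ t ∂α, 0 ≤ G.eval t) (h : ℝ → ℝ) :
    ∫ t, h t ∂(α.withDensity (fun t => ENNReal.ofReal (G.eval t)))
      = ∫ t, G.eval t * h t ∂α := by
  have hmeas : Measurable (fun t => (G.eval t).toNNReal) :=
    G.continuous_aeval.measurable.real_toNNReal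
  have : (fun t => ENNReal.ofReal (G.eval t))
      = fun t => ((fun t => (G.eval t).toNNReal) t : ℝ≥0∞) := rfl
  rw [this, integral_withDensity_eq_integral_smul hmeas h]
  refine integral_congr_ae ?_
  filter_upwards [hgpos] with t ht
  simp [NNReal.smul_def, Real.coe_toNNReal _ ht]

private lemma aux_span (q : ℕ → Polynomial ℝ) (hq : ∀ k, (q k).Monic)
    (hd : ∀ k, (q k).natDegree = k) :
    ∀ (n : ℕ) (p : Polynomial ℝ), p.degree < n → ∃ c : Fin n → ℝ, p = ∑ i, c i • q i := by
  intro n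
  induction n with
  | zero =>
    intro p hp
    refine ⟨fun i => 0, ?_⟩
    simp only [Nat.cast_zero] at hp
    have : p = 0 := by
      by_contra h
      exact absurd hp (by simp [Polynomial.degree_eq_natDegree h])
    simp [this]
  | succ n ih =>
    intro p hp
    by_cases h : p.degree < n
    · obtain ⟨c, hc⟩ := ih p h
      refine ⟨fun i => if hi : (i : ℕ) < n then c ⟨i, hi⟩ else 0, ?_⟩
      rw [hc, Fin.sum_univ_castSucc]
      simp [Fin.is_lt]
    · -- degree p = n, p ≠ 0
      have hp0 : p ≠ 0 := by
        intro h0; rw [h0] at h; exact h (by simp [Polynomial.degree_zero])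
      have hdeg : p.natDegree = n := by
        have h1 : p.degree ≤ n := by
          rw [Polynomial.degree_eq_natDegree hp0] at hp ⊢
          exact_mod_cast Nat.lt_succ_iff.1 (by exact_mod_cast hp)
        have h2 : ¬ p.degree < n := h
        have := le_antisymm h1 (not_lt.1 h2)
        rwa [Polynomial.degree_eq_natDegree hp0, Nat.cast_inj] at this
      set r := p - p.leadingCoeff • q n with hr
      have hlc : p.leadingCoeff ≠ 0 := Polynomial.leadingCoeff_ne_zero.2 hp0
      have hdr : r.degree < n := by
        have hql : (p.leadingCoeff • q n).leadingCoeff = p.leadingCoeff := by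
          rw [Polynomial.smul_eq_C_mul, Polynomial.leadingCoeff_mul, Polynomial.leadingCoeff_C,
            (hq n).leadingCoeff, mul_one]
        have hqd : (p.leadingCoeff • q n).degree = p.degree := by
          rw [Polynomial.smul_eq_C_mul, Polynomial.degree_C_mul (by exact hlc),
            Polynomial.degree_eq_natDegree (hq n).ne_zero,
            Polynomial.degree_eq_natDegree hp0, hd, hdeg]
        have := Polynomial.degree_sub_lt hqd.symm hp0 (hql.symm ▸ rfl)
        calc r.degree < p.degree := this
          _ = n := by rw [Polynomial.degree_eq_natDegree hp0, hdeg]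
      obtain ⟨c, hc⟩ := ih r hdr
      obtain ⟨L, hL⟩ : ∃ L, p.leadingCoeff = L := ⟨_, rfl⟩
      refine ⟨fun i => if hi : (i : ℕ) < n then c ⟨i, hi⟩ else L, ?_⟩
      have key : p = (∑ i : Fin n, c i • q ↑i) + L • q n := by
        rw [← hc, hr, hL]; ring
      rw [Fin.sum_univ_castSucc]
      rw [key]
      congr 1
      · apply Finset.sum_congr rfl
        intro i _
        simp [Fin.is_lt]
      · simp

/-- orthogonality against all lower-degree polynomials -/
private lemma aux_orth_ext {Q : ℝ} (β : Measure ℝ) [IsFiniteMeasure β]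
    (hβ : β (Set.Icc (-Q) Q)ᶜ = 0) (q : ℕ → Polynomial ℝ) (hq : ∀ k, (q k).Monic)
    (hd : ∀ k, (q k).natDegree = k)
    (horth : ∀ k l, k ≠ l → ∫ t, (q k).eval t * (q l).eval t ∂β = 0)
    (m n : ℕ) (hnm : n ≤ m) (r : Polynomial ℝ) (hr : r.degree < n) :
    ∫ t, r.eval t * (q m).eval t ∂β = 0 := by
  obtain ⟨c, rfl⟩ := aux_span q hq hd n r hr
  have h1 : (fun t => (∑ i : Fin n, c i • q i).eval t * (q m).eval t)
      = fun t => ∑ i : Fin n, c i • ((q i * q m).eval t) := by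
    funext t
    rw [Polynomial.eval_finset_sum, Finset.sum_mul]
    apply Finset.sum_congr rfl
    intro i _
    simp [Polynomial.eval_smul, mul_assoc]
  rw [h1, integral_finset_sum]
  · apply Finset.sum_eq_zero
    intro i _
    rw [integral_smul]
    have : ∫ t, (q i * q m).eval t ∂β = 0 := by
      simp only [Polynomial.eval_mul]
      exact horth i m (by omega)
    rw [this, smul_zero]
  · intro i _
    exact (aux_integrable β hβ (q i * q m)).smul (c i)

/-- positive definiteness -/
private lemma aux_posdef {Q : ℝ} (α : Measure ℝ) [IsFiniteMeasure α]
    (hQ : α (Set.Icc (-Q) Q)ᶜ = 0)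
    (hposdef : ∀ p : Polynomial ℝ, p ≠ 0 → 0 < ∫ t, (p.eval t) ^ 2 ∂α)
    (G : Polynomial ℝ) (hGpos : ∀ t ∈ Set.Icc (-Q) Q, 0 < G.eval t)
    (p : Polynomial ℝ) (hp : p ≠ 0) :
    0 < ∫ t, (p.eval t) ^ 2 ∂(α.withDensity (fun t => ENNReal.ofReal (G.eval t))) := by
  have hae : ∀ᵐ t ∂α, 0 < G.eval t := by
    filter_upwards [aux_ae_Icc α hQ] with t ht using hGpos t ht
  have hconv : ∫ t, (p.eval t) ^ 2 ∂(α.withDensity (fun t => ENNReal.ofReal (G.eval t)))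
      = ∫ t, G.eval t * (p.eval t) ^ 2 ∂α := by
    exact aux_withDensity_integral α G
      (by filter_upwards [hae] with t ht using ht.le) (fun t => (p.eval t) ^ 2)
  rw [hconv]
  have hnn : ∀ᵐ t ∂α, 0 ≤ G.eval t * (p.eval t) ^ 2 := by
    filter_upwards [hae] with t ht using mul_nonneg ht.le (sq_nonneg _)
  have hint : Integrable (fun t => G.eval t * (p.eval t) ^ 2) α := by
    have : (fun t => G.eval t * (p.eval t) ^ 2) = fun t => (G * p ^ 2).eval t := by
      funext t; simp [Polynomial.eval_mul, Polynomial.eval_pow]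
    rw [this]; exact aux_integrable α hQ _
  rcases (integral_nonneg_of_ae hnn).lt_or_eq with h | h
  · exact h
  · exfalso
    have hz := (integral_eq_zero_iff_of_nonneg_ae hnn hint).1 h.symm
    have hp2 : (fun t => (p.eval t) ^ 2) =ᵐ[α] 0 := by
      filter_upwards [hz, hae] with t ht hg
      have : G.eval t * (p.eval t) ^ 2 = 0 := ht
      have := (mul_eq_zero.1 this).resolve_left hg.ne'
      simpa using this
    have : ∫ t, (p.eval t) ^ 2 ∂α = 0 := by
      rw [integral_congr_ae hp2]; simp
    exact absurd this (hposdef p hp).ne'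

/-- uniqueness of monic orthogonal polynomial -/
private lemma aux_unique {Q : ℝ} (β : Measure ℝ) [IsFiniteMeasure β]
    (hβ : β (Set.Icc (-Q) Q)ᶜ = 0)
    (hpos : ∀ p : Polynomial ℝ, p ≠ 0 → 0 < ∫ t, (p.eval t) ^ 2 ∂β)
    (n : ℕ) (p q : Polynomial ℝ) (hpm : p.Monic) (hqm : q.Monic)
    (hpd : p.natDegree = n) (hqd : q.natDegree = n)
    (hp : ∀ r : Polynomial ℝ, r.degree < n → ∫ t, r.eval t * p.eval t ∂β = 0)
    (hq : ∀ r : Polynomial ℝ, r.degree < n → ∫ t, r.eval t * q.eval t ∂β = 0) :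
    p = q := by
  by_contra hne
  have hs0 : p - q ≠ 0 := sub_ne_zero.2 hne
  have hsd : (p - q).degree < n := by
    have := Polynomial.degree_sub_lt
      (show p.degree = q.degree by
        rw [Polynomial.degree_eq_natDegree hpm.ne_zero, Polynomial.degree_eq_natDegree hqm.ne_zero, hpd, hqd])
      hpm.ne_zero (show p.leadingCoeff = q.leadingCoeff by rw [hpm.leadingCoeff, hqm.leadingCoeff])
    calc (p - q).degree < p.degree := this
      _ = n := by rw [Polynomial.degree_eq_natDegree hpm.ne_zero, hpd]
  have h1 := hp (p - q) hsd
  have h2 := hq (p - q) hsd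
  have hint : ∀ u : Polynomial ℝ, Integrable (fun t => (p-q).eval t * u.eval t) β := by
    intro u
    have : (fun t => (p-q).eval t * u.eval t) = fun t => ((p-q) * u).eval t := by
      funext t; simp [Polynomial.eval_mul]
    rw [this]; exact aux_integrable β hβ _
  have h3 : ∫ t, (p - q).eval t * (p - q).eval t ∂β = 0 := by
    have : (fun t => (p - q).eval t * (p - q).eval t)
        = fun t => (p-q).eval t * p.eval t - (p-q).eval t * q.eval t := by
      funext t; simp [Polynomial.eval_sub]; ring
    rw [this, integral_sub (hint p) (hint q), h1, h2, sub_zero]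
  have : ∫ t, ((p - q).eval t) ^ 2 ∂β = 0 := by
    rw [show (fun t => ((p - q).eval t) ^ 2) = fun t => (p - q).eval t * (p - q).eval t from
      funext fun t => sq ((p-q).eval t)]
    exact h3
  exact absurd this (hpos _ hs0).ne'

/-- no roots above Q -/
private lemma aux_no_root {Q : ℝ} (β : Measure ℝ) [IsFiniteMeasure β]
    (hβ : β (Set.Icc (-Q) Q)ᶜ = 0)
    (hpos : ∀ p : Polynomial ℝ, p ≠ 0 → 0 < ∫ t, (p.eval t) ^ 2 ∂β)
    (n : ℕ) (p : Polynomial ℝ) (hpm : p.Monic) (hpd : p.natDegree = n)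
    (hp : ∀ r : Polynomial ℝ, r.degree < n → ∫ t, r.eval t * p.eval t ∂β = 0)
    (x₀ : ℝ) (hx₀ : Q < x₀) : p.eval x₀ ≠ 0 := by
  rcases Nat.eq_zero_or_pos n with hn | hn
  · have : p = 1 := hpm.natDegree_eq_zero.1 (by rw [hpd, hn])
    simp [this]
  intro h0
  obtain ⟨q, hq⟩ := (Polynomial.dvd_iff_isRoot.2 h0 : (X - C x₀) ∣ p)
  have hq0 : q ≠ 0 := by
    intro h; rw [h, mul_zero] at hq; exact hpm.ne_zero hq
  have hX0 : (X - C x₀ : Polynomial ℝ) ≠ 0 := Polynomial.X_sub_C_ne_zero x₀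
  have hqd : q.natDegree = n - 1 := by
    have := Polynomial.natDegree_mul hX0 hq0
    rw [← hq, hpd, Polynomial.natDegree_X_sub_C] at this
    omega
  have hqdeg : q.degree < n := by
    rw [Polynomial.degree_eq_natDegree hq0, hqd]
    exact_mod_cast Nat.sub_lt hn one_pos
  have h1 := hp q hqdeg
  have h2 : (fun t => q.eval t * p.eval t) = fun t => (t - x₀) * (q.eval t) ^ 2 := by
    funext t; rw [hq]; simp; ring
  have hae : ∀ᵐ t ∂β, t < x₀ := by
    filter_upwards [aux_ae_Icc β hβ] with t ht using lt_of_le_of_lt ht.2 hx₀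
  have h3 : ∫ t, (x₀ - t) * (q.eval t) ^ 2 ∂β = 0 := by
    have : (fun t => (x₀ - t) * (q.eval t) ^ 2) = fun t => -((t - x₀) * (q.eval t) ^ 2) := by
      funext t; ring
    rw [this, integral_neg, ← h2, h1, neg_zero]
  have hnn : ∀ᵐ t ∂β, 0 ≤ (x₀ - t) * (q.eval t) ^ 2 := by
    filter_upwards [hae] with t ht using mul_nonneg (by linarith) (sq_nonneg _)
  have hint : Integrable (fun t => (x₀ - t) * (q.eval t) ^ 2) β := by
    have : (fun t => (x₀ - t) * (q.eval t) ^ 2) = fun t => ((C x₀ - X) * q ^ 2).eval t := by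
      funext t; simp
    rw [this]; exact aux_integrable β hβ _
  have hz := (integral_eq_zero_iff_of_nonneg_ae hnn hint).1 h3
  have hq2 : (fun t => (q.eval t) ^ 2) =ᵐ[β] 0 := by
    filter_upwards [hz, hae] with t ht hlt
    have : (x₀ - t) * (q.eval t) ^ 2 = 0 := ht
    have := (mul_eq_zero.1 this).resolve_left (by linarith)
    simpa using this
  have : ∫ t, (q.eval t) ^ 2 ∂β = 0 := by rw [integral_congr_ae hq2]; simp
  exact absurd this (hpos q hq0).ne'

/-- divisibility by product of distinct linear factors -/
private lemma aux_dvd (m : ℕ) (ν : ℕ → ℝ)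
    (hν : ∀ i < m, ∀ j < m, i ≠ j → ν i ≠ ν j) (E : Polynomial ℝ)
    (hroot : ∀ k < m, E.eval (ν k) = 0) :
    (∏ k ∈ Finset.range m, (X - C (ν k))) ∣ E := by
  apply Finset.prod_dvd_of_coprime
  · intro i hi j hj hij
    simp only [Finset.coe_range, Set.mem_Iio] at hi hj
    exact Polynomial.isCoprime_X_sub_C_of_isUnit_sub
      (IsUnit.mk0 _ (sub_ne_zero.2 (hν i hi j hj hij)))
  · intro i hi
    rw [Finset.mem_range] at hi
    exact Polynomial.dvd_iff_isRoot.2 (hroot i hi)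

private lemma christoffel_step {Q : ℝ} (α : Measure ℝ) [IsFiniteMeasure α]
    (hQ : α (Set.Icc (-Q) Q)ᶜ = 0)
    (hposdef : ∀ p : Polynomial ℝ, p ≠ 0 → 0 < ∫ t, (p.eval t) ^ 2 ∂α)
    (π : ℕ → Polynomial ℝ)
    (hmonic : ∀ j, (π j).Monic) (hdeg : ∀ j, (π j).natDegree = j)
    (horth : ∀ j k, j ≠ k → ∫ t, (π j).eval t * (π k).eval t ∂α = 0)
    (n m : ℕ) (ν : ℕ → ℝ)
    (hinj : ∀ i ≤ m, ∀ j ≤ m, i ≠ j → ν i ≠ ν j) (hνQ : ∀ k ≤ m, Q < ν k)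
    (p : Polynomial ℝ) (hpm : p.Monic) (hpd : p.natDegree = n)
    (horthp : ∀ r : Polynomial ℝ, r.degree < n →
      ∫ t, r.eval t * p.eval t
        ∂(α.withDensity fun t => ENNReal.ofReal (∏ k ∈ Finset.range m, (ν k - t))) = 0)
    (hD : det (Matrix.of fun i j : Fin m => (π (n + (j:ℕ))).eval (ν i)) ≠ 0) :
    det (Matrix.of fun i j : Fin (m+1) => (π (n + (j:ℕ))).eval (ν i))
      = p.eval (ν m) * det (Matrix.of fun i j : Fin m => (π (n + (j:ℕ))).eval (ν i))
        * ∏ k ∈ Finset.range m, (ν m - ν k)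
      ∧ p.eval (ν m) ≠ 0 := by
  -- notation
  set D : ℝ := det (Matrix.of fun i j : Fin m => (π (n + (j:ℕ))).eval (ν i)) with hDdef
  -- the density polynomial
  set Gp : Polynomial ℝ := ∏ k ∈ Finset.range m, (C (ν k) - X) with hGp
  have hGeval : ∀ t, Gp.eval t = ∏ k ∈ Finset.range m, (ν k - t) := by
    intro t; rw [hGp, Polynomial.eval_prod]; simp
  have hβeq : (α.withDensity fun t => ENNReal.ofReal (∏ k ∈ Finset.range m, (ν k - t)))
      = α.withDensity (fun t => ENNReal.ofReal (Gp.eval t)) := by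
    congr 1; funext t; rw [hGeval]
  set β := α.withDensity (fun t => ENNReal.ofReal (Gp.eval t)) with hβ
  haveI : IsFiniteMeasure β := aux_withDensity_finite α hQ Gp
  have hβc : β (Set.Icc (-Q) Q)ᶜ = 0 := aux_withDensity_compl_zero α hQ _
  have hGpos : ∀ t ∈ Set.Icc (-Q) Q, 0 < Gp.eval t := by
    intro t ht
    rw [hGeval]
    apply Finset.prod_pos
    intro k hk
    rw [Finset.mem_range] at hk
    have := hνQ k (le_of_lt hk)
    have := ht.2
    linarith
  have hβpos : ∀ p : Polynomial ℝ, p ≠ 0 → 0 < ∫ t, (p.eval t) ^ 2 ∂β :=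
    fun p hp => aux_posdef α hQ hposdef Gp hGpos p hp
  have horthp' : ∀ r : Polynomial ℝ, r.degree < n → ∫ t, r.eval t * p.eval t ∂β = 0 := by
    intro r hr; rw [← hβeq]; exact horthp r hr
  have hpne : p.eval (ν m) ≠ 0 :=
    aux_no_root β hβc hβpos n p hpm hpd horthp' (ν m) (hνQ m le_rfl)
  refine ⟨?_, hpne⟩
  -- the cofactors
  set Mi : Fin (m+1) → ℝ := fun j =>
    det (Matrix.of fun i k : Fin m => (π (n + ((j.succAbove k : Fin (m+1)) : ℕ))).eval (ν i)) with hMi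
  set E : Polynomial ℝ :=
    ∑ j : Fin (m+1), ((-1:ℝ)^((m:ℕ)+(j:ℕ)) * Mi j) • π (n + (j:ℕ)) with hE
  have hEeval : ∀ x : ℝ, E.eval x
      = det (Matrix.of fun i j : Fin (m+1) =>
          (π (n + (j:ℕ))).eval (if (i:ℕ) < m then ν i else x)) := by
    intro x
    rw [Matrix.det_succ_row _ (Fin.last m)]
    rw [hE, Polynomial.eval_finset_sum]
    apply Finset.sum_congr rfl
    intro j _
    have h1 : (Matrix.of fun i j : Fin (m+1) =>
        (π (n + (j:ℕ))).eval (if (i:ℕ) < m then ν i else x)) (Fin.last m) j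
        = (π (n + (j:ℕ))).eval x := by
      simp [Matrix.of_apply]
    have h2 : ((Matrix.of fun i j : Fin (m+1) =>
          (π (n + (j:ℕ))).eval (if (i:ℕ) < m then ν i else x)).submatrix
          (Fin.last m).succAbove j.succAbove)
        = Matrix.of fun i k : Fin m => (π (n + ((j.succAbove k : Fin (m+1)) : ℕ))).eval (ν i) := by
      ext i k
      simp only [Matrix.submatrix_apply, Matrix.of_apply, Fin.succAbove_last, Fin.coe_castSucc]
      rw [if_pos i.is_lt]
    rw [h1, h2]
    simp only [Polynomial.eval_smul, smul_eq_mul, Fin.val_last]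
    ring
  -- roots
  have hroots : ∀ k < m, E.eval (ν k) = 0 := by
    intro k hk
    rw [hEeval]
    apply Matrix.det_zero_of_row_eq (i := (⟨k, by omega⟩ : Fin (m+1))) (j := Fin.last m)
    · intro h
      have := congrArg Fin.val h
      simp at this; omega
    · funext j
      simp only [Matrix.of_apply, Fin.val_last]
      rw [if_pos hk, if_neg (lt_irrefl m)]
  -- value at ν m
  have hlast : E.eval (ν m)
      = det (Matrix.of fun i j : Fin (m+1) => (π (n + (j:ℕ))).eval (ν i)) := by
    rw [hEeval]
    congr 1
    ext i j
    simp only [Matrix.of_apply]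
    by_cases h : (i:ℕ) < m
    · rw [if_pos h]
    · rw [if_neg h]
      have : (i:ℕ) = m := by omega
      rw [this]
  -- Mi at last is D
  have hMilast : Mi (Fin.last m) = D := by
    have h : (Matrix.of fun i k : Fin m =>
        (π (n + (((Fin.last m).succAbove k : Fin (m+1)) : ℕ))).eval (ν i))
        = Matrix.of fun i k : Fin m => (π (n + (k:ℕ))).eval (ν i) := by
      ext i k
      rw [Fin.succAbove_last]
      simp
    exact congrArg Matrix.det h
  -- coefficient n+m
  have hcoeff : E.coeff (n + m) = D := by
    rw [hE, Polynomial.finset_sum_coeff]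
    rw [Finset.sum_eq_single (Fin.last m)]
    · rw [Polynomial.coeff_smul, hMilast, Fin.val_last]
      have : (π (n + m)).coeff (n + m) = 1 := by
        have := (hmonic (n+m)).coeff_natDegree
        rwa [hdeg (n+m)] at this
      rw [this, smul_eq_mul, mul_one, ← two_mul, pow_mul]
      norm_num
    · intro j _ hj
      rw [Polynomial.coeff_smul]
      have hjm : (j:ℕ) < m := by
        rcases lt_or_eq_of_le (Nat.lt_succ_iff.1 j.is_lt) with h | h
        · exact h
        · exact absurd (Fin.ext h : j = Fin.last m) hj
      have : (π (n + (j:ℕ))).coeff (n + m) = 0 := by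
        apply Polynomial.coeff_eq_zero_of_natDegree_lt
        rw [hdeg]; omega
      rw [this, smul_zero]
    · intro h
      exact absurd (Finset.mem_univ _) h
  have hdegE : E.natDegree ≤ n + m := by
    rw [hE]
    apply Polynomial.natDegree_sum_le_of_forall_le
    intro j _
    refine (Polynomial.natDegree_smul_le _ _).trans ?_
    rw [hdeg]
    have := Nat.lt_succ_iff.1 j.is_lt
    omega
  have hEne : E ≠ 0 := fun h => hD (by rw [← hcoeff, h, Polynomial.coeff_zero])
  have hdegE' : E.natDegree = n + m :=
    le_antisymm hdegE (Polynomial.le_natDegree_of_ne_zero (hcoeff ▸ hD))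
  -- divisibility
  set W : Polynomial ℝ := ∏ k ∈ Finset.range m, (X - C (ν k)) with hW
  have hWm : W.Monic := monic_prod_of_monic _ _ (fun k _ => Polynomial.monic_X_sub_C _)
  have hWd : W.natDegree = m := by
    rw [hW, Polynomial.natDegree_prod _ _ (fun k _ => Polynomial.X_sub_C_ne_zero _)]
    simp
  obtain ⟨G, hWG⟩ : W ∣ E := by
    apply aux_dvd m ν _ E hroots
    intro i hi j hj hij
    exact hinj i (le_of_lt hi) j (le_of_lt hj) hij
  have hGne : G ≠ 0 := by
    intro h; rw [h, mul_zero] at hWG; exact hEne hWG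
  have hGd : G.natDegree = n := by
    have := Polynomial.natDegree_mul hWm.ne_zero hGne
    rw [← hWG, hdegE', hWd] at this
    omega
  have hGlc : G.leadingCoeff = D := by
    have h1 : E.leadingCoeff = W.leadingCoeff * G.leadingCoeff := by
      rw [hWG, Polynomial.leadingCoeff_mul]
    rw [hWm.leadingCoeff, one_mul] at h1
    rw [← h1, Polynomial.leadingCoeff, hdegE', hcoeff]
  -- the normalized quotient
  set p' : Polynomial ℝ := D⁻¹ • G with hp'
  have hp'm : p'.Monic := by
    rw [Polynomial.Monic, hp', Polynomial.smul_eq_C_mul, Polynomial.leadingCoeff_mul,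
      Polynomial.leadingCoeff_C, hGlc, inv_mul_cancel₀ hD]
  have hp'd : p'.natDegree = n := by
    rw [hp', Polynomial.smul_eq_C_mul, Polynomial.natDegree_C_mul (inv_ne_zero hD), hGd]
  -- orthogonality of p'
  have hEorth : ∀ r : Polynomial ℝ, r.degree < n → ∫ t, r.eval t * E.eval t ∂α = 0 := by
    intro r hr
    have h1 : (fun t => r.eval t * E.eval t)
        = fun t => ∑ j : Fin (m+1), ((-1:ℝ)^((m:ℕ)+(j:ℕ)) * Mi j)
            • (r.eval t * (π (n + (j:ℕ))).eval t) := by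
      funext t
      rw [hE, Polynomial.eval_finset_sum, Finset.mul_sum]
      apply Finset.sum_congr rfl
      intro j _
      simp only [Polynomial.eval_smul, smul_eq_mul]
      ring
    rw [h1, integral_finset_sum]
    · apply Finset.sum_eq_zero
      intro j _
      rw [integral_smul]
      have := aux_orth_ext α hQ π hmonic hdeg horth (n + (j:ℕ)) n (Nat.le_add_right n _) r hr
      rw [this, smul_zero]
    · intro j _
      have h2 : (fun t => ((-1:ℝ)^((m:ℕ)+(j:ℕ)) * Mi j) • (r.eval t * (π (n + (j:ℕ))).eval t))
          = fun t => ((-1:ℝ)^((m:ℕ)+(j:ℕ)) * Mi j) • ((r * π (n + (j:ℕ))).eval t) := by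
        funext t; rw [Polynomial.eval_mul]
      rw [h2]
      simp only [smul_eq_mul]
      exact (aux_integrable α hQ (r * π (n + (j:ℕ)))).const_mul _
  have hGaeNN : ∀ᵐ t ∂α, 0 ≤ Gp.eval t := by
    filter_upwards [aux_ae_Icc α hQ] with t ht using (hGpos t ht).le
  have hGW : ∀ t, Gp.eval t = (-1:ℝ)^m * W.eval t := by
    intro t
    rw [hGeval]
    calc ∏ k ∈ Finset.range m, (ν k - t)
        = ∏ k ∈ Finset.range m, (-1) * (t - ν k) :=
          Finset.prod_congr rfl fun k _ => by ring
      _ = (-1)^m * ∏ k ∈ Finset.range m, (t - ν k) := by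
          rw [Finset.prod_mul_distrib, Finset.prod_const, Finset.card_range]
      _ = (-1)^m * W.eval t := by
          rw [hW, Polynomial.eval_prod]
          simp
  have horthp'' : ∀ r : Polynomial ℝ, r.degree < n → ∫ t, r.eval t * p'.eval t ∂β = 0 := by
    intro r hr
    rw [hβ, aux_withDensity_integral α Gp hGaeNN]
    have h1 : (fun t => Gp.eval t * (r.eval t * p'.eval t))
        = fun t => ((-1:ℝ)^m * D⁻¹) * (r.eval t * E.eval t) := by
      funext t
      rw [hGW, hWG, hp']
      simp only [Polynomial.eval_smul, Polynomial.eval_mul, smul_eq_mul]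
      ring
    rw [h1, integral_const_mul, hEorth r hr, mul_zero]
  -- uniqueness
  have hpp' : p' = p := aux_unique β hβc hβpos n p' p hp'm hpm hp'd hpd horthp'' horthp'
  have hGp' : G = D • p := by
    have : G = D • p' := by
      rw [hp', smul_smul, mul_inv_cancel₀ hD, one_smul]
    rw [this, hpp']
  -- final computation
  have : E.eval (ν m) = W.eval (ν m) * (D * p.eval (ν m)) := by
    rw [hWG, hGp']
    simp only [Polynomial.eval_mul, Polynomial.eval_smul, smul_eq_mul]
  rw [hlast] at this
  rw [this]
  have hWeval : W.eval (ν m) = ∏ k ∈ Finset.range m, (ν m - ν k) := by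
    rw [hW, Polynomial.eval_prod]; simp
  rw [hWeval]
  ring


/-- Corollary of Christoffel's formula: `∏_{j=0}^{ℓ} π_n^{[j]}(μ_{j+1})`
equals `det(π_{n+j-1}(μ_i)) / Δ(μ)`. -/
theorem product_of_successive_orthopolys_eq_det (α : Measure ℝ) [IsFiniteMeasure α] (Q : ℝ)
    (hQ : α (Set.Icc (-Q) Q)ᶜ = 0)
    (hposdef : ∀ p : Polynomial ℝ, p ≠ 0 → 0 < ∫ t, (p.eval t) ^ 2 ∂α)
    (π : ℕ → Polynomial ℝ)
    (hmonic : ∀ j, (π j).Monic) (hdeg : ∀ j, (π j).natDegree = j)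
    (horth : ∀ j k, j ≠ k → ∫ t, (π j).eval t * (π k).eval t ∂α = 0)
    (ℓ : ℕ) (μ : Fin (ℓ + 1) → ℝ) (hμ : Function.Injective μ) (hμQ : ∀ i, Q < μ i)
    -- the modified measures dα^{[j]}(t) = ∏_{k<j} (μ_k - t) dα(t)  (dα^{[0]} = dα)
    (αm : Fin (ℓ + 1) → Measure ℝ)
    (hαm : ∀ j, αm j = α.withDensity
      (fun t => ENNReal.ofReal (∏ k ∈ Finset.Iio j, (μ k - t))))
    -- πm j is the system of monic orthogonal polynomials for dα^{[j]}
    (πm : Fin (ℓ + 1) → ℕ → Polynomial ℝ)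
    (hmonic' : ∀ j k, (πm j k).Monic) (hdeg' : ∀ j k, (πm j k).natDegree = k)
    (horth' : ∀ j, ∀ k l, k ≠ l →
      ∫ t, (πm j k).eval t * (πm j l).eval t ∂(αm j) = 0)
    (n : ℕ) :
    ∏ j : Fin (ℓ + 1), (πm j n).eval (μ j)
      = (Matrix.of fun i j : Fin (ℓ + 1) => (π (n + j)).eval (μ i)).det / Vand μ := by
  classical
  set ν : ℕ → ℝ := fun k => if h : k < ℓ + 1 then μ ⟨k, h⟩ else 0 with hν
  set pm : ℕ → Polynomial ℝ := fun k => if h : k < ℓ + 1 then πm ⟨k, h⟩ n else 1 with hpmdef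
  have hνμ : ∀ i : Fin (ℓ + 1), ν (i : ℕ) = μ i := by
    intro i
    rw [hν]
    simp [i.is_lt]
  have hIio : ∀ (j : Fin (ℓ + 1)) (g : ℕ → ℝ),
      ∏ k ∈ Finset.Iio j, g (k : ℕ) = ∏ k ∈ Finset.range (j : ℕ), g k := by
    intro j g
    rw [← Nat.Iio_eq_range, ← Fin.map_valEmbedding_Iio, Finset.prod_map]
    rfl
  -- the measures in polynomial-density form
  have hform : ∀ j : Fin (ℓ + 1), αm j = α.withDensity
      (fun t => ENNReal.ofReal ((∏ k ∈ Finset.Iio j, (C (μ k) - X) : Polynomial ℝ).eval t)) := by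
    intro j
    rw [hαm j]
    congr 1
    funext t
    rw [Polynomial.eval_prod]
    simp
  have hαmfin : ∀ j, IsFiniteMeasure (αm j) := by
    intro j
    rw [hform j]
    exact aux_withDensity_finite α hQ _
  have hαmc : ∀ j, (αm j) (Set.Icc (-Q) Q)ᶜ = 0 := by
    intro j
    rw [hform j]
    exact aux_withDensity_compl_zero α hQ _
  -- the key induction
  have key : ∀ m : ℕ, m ≤ ℓ + 1 →
      det (Matrix.of fun i j : Fin m => (π (n + (j:ℕ))).eval (ν i)) ≠ 0 ∧
      det (Matrix.of fun i j : Fin m => (π (n + (j:ℕ))).eval (ν i))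
        = (∏ k ∈ Finset.range m, (pm k).eval (ν k))
          * ∏ i ∈ Finset.range m, ∏ k ∈ Finset.range i, (ν i - ν k) := by
    intro m
    induction m with
    | zero =>
      intro _
      constructor
      · rw [Matrix.det_fin_zero]; exact one_ne_zero
      · rw [Matrix.det_fin_zero]; simp
    | succ m ih =>
      intro hm1
      have hmℓ : m < ℓ + 1 := by omega
      obtain ⟨hD, hprod⟩ := ih (by omega)
      have hinj' : ∀ i ≤ m, ∀ j ≤ m, i ≠ j → ν i ≠ ν j := by
        intro i hi j hj hij
        rw [hν]
        simp only [dif_pos (by omega : i < ℓ + 1), dif_pos (by omega : j < ℓ + 1)]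
        intro h
        have := hμ h
        rw [Fin.mk.injEq] at this
        exact hij this
      have hνQ' : ∀ k ≤ m, Q < ν k := by
        intro k hk
        rw [hν]
        simp only [dif_pos (by omega : k < ℓ + 1)]
        exact hμQ _
      have hpmm : pm m = πm ⟨m, hmℓ⟩ n := by rw [hpmdef]; simp [hmℓ]
      have hβm : α.withDensity (fun t => ENNReal.ofReal (∏ k ∈ Finset.range m, (ν k - t)))
          = αm ⟨m, hmℓ⟩ := by
        rw [hαm]
        congr 1
        funext t
        congr 1
        have := hIio ⟨m, hmℓ⟩ (fun k => ν k - t)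
        simp only at this
        rw [← this]
        apply Finset.prod_congr rfl
        intro k _
        rw [hνμ]
      have horthp : ∀ r : Polynomial ℝ, r.degree < n →
          ∫ t, r.eval t * (pm m).eval t
            ∂(α.withDensity fun t => ENNReal.ofReal (∏ k ∈ Finset.range m, (ν k - t))) = 0 := by
        intro r hr
        rw [hβm, hpmm]
        haveI := hαmfin ⟨m, hmℓ⟩
        exact aux_orth_ext (αm ⟨m, hmℓ⟩) (hαmc _) (πm ⟨m, hmℓ⟩) (hmonic' _) (hdeg' _)
          (horth' _) n n le_rfl r hr
      obtain ⟨heq, hne⟩ := christoffel_step α hQ hposdef π hmonic hdeg horth n m ν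
        hinj' hνQ' (pm m) (hpmm ▸ hmonic' ⟨m, hmℓ⟩ n) (hpmm ▸ hdeg' ⟨m, hmℓ⟩ n) horthp hD
      have hprodne : (∏ k ∈ Finset.range m, (ν m - ν k)) ≠ 0 := by
        apply Finset.prod_ne_zero_iff.2
        intro k hk
        rw [Finset.mem_range] at hk
        exact sub_ne_zero.2 (hinj' m le_rfl k (by omega) (by omega))
      constructor
      · rw [heq]
        exact mul_ne_zero (mul_ne_zero hne hD) hprodne
      · rw [heq, hprod, Finset.prod_range_succ, Finset.prod_range_succ]
        ring
  obtain ⟨hDfin, hfin⟩ := key (ℓ + 1) le_rfl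
  have hdet : (Matrix.of fun i j : Fin (ℓ + 1) => (π (n + j)).eval (μ i))
      = Matrix.of fun i j : Fin (ℓ + 1) => (π (n + (j:ℕ))).eval (ν i) := by
    ext i j
    simp only [Matrix.of_apply]
    rw [hνμ i]
  have hVand : Vand μ = ∏ i ∈ Finset.range (ℓ + 1), ∏ k ∈ Finset.range i, (ν i - ν k) := by
    rw [Vand, ← Fin.prod_univ_eq_prod_range (fun i => ∏ k ∈ Finset.range i, (ν i - ν k)) (ℓ+1)]
    apply Finset.prod_congr rfl
    intro i _
    have := hIio i (fun k => ν (i:ℕ) - ν k)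
    rw [← this]
    apply Finset.prod_congr rfl
    intro k _
    rw [hνμ, hνμ]
  have hprodμ : ∏ j : Fin (ℓ + 1), (πm j n).eval (μ j)
      = ∏ k ∈ Finset.range (ℓ + 1), (pm k).eval (ν k) := by
    rw [← Fin.prod_univ_eq_prod_range (fun k => (pm k).eval (ν k)) (ℓ+1)]
    apply Finset.prod_congr rfl
    intro j _
    rw [hνμ, hpmdef]
    simp only [dif_pos j.is_lt]
  have hVne : (∏ i ∈ Finset.range (ℓ + 1), ∏ k ∈ Finset.range i, (ν i - ν k)) ≠ 0 :=
    right_ne_zero_of_mul (hfin ▸ hDfin)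
  rw [hprodμ, congrArg Matrix.det hdet, hVand, hfin, mul_div_cancel_right₀ _ hVne]
end
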